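/- Let a < b be real numbers, let α ∈ (0,1], let ψ : [a,b] → ℂ be α-Hölder continuous, and let λ ∈ (a,b). Then lim_{ε→0⁺} ∫_a^b ψ(t)/(t − λ − iε) dt = p.v.∫_a^b ψ(t)/(t−λ) dt + iπ ψ(λ). -/

import Mathlib

open MeasureTheory Filter Set Topology

lemma hasDerivAt_ofReal' (t : ℝ) : HasDerivAt (fun s : ℝ => (s : ℂ)) 1 t := by
  simpa using (hasDerivAt_id t).ofReal_comp

/-- Sokhotski–Plemelj formula:
`lim_{ε→0⁺} ∫_a^b ψ(t)/(t-λ-iε) dt = p.v.∫_a^b ψ(t)/(t-λ) dt + iπ ψ(λ)`. -/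
theorem plemelj_formula (a b α : ℝ) (hab : a < b) (hα : α ∈ Set.Ioc (0:ℝ) 1)
    (ψ : ℝ → ℂ) (M : ℝ) (hM : 0 ≤ M)
    (hHolder : ∀ t ∈ Set.Icc a b, ∀ t' ∈ Set.Icc a b,
      ‖ψ t - ψ t'‖ ≤ M * |t - t'| ^ α)
    (lam : ℝ) (hlam : lam ∈ Set.Ioo a b) :
    ∃ L : ℂ,
      Filter.Tendsto
        (fun δ : ℝ => ∫ t in Set.Icc a b \ Set.Ioo (lam - δ) (lam + δ),
          ψ t / ((t : ℂ) - (lam : ℂ)))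
        (nhdsWithin 0 (Set.Ioi 0)) (nhds L) ∧
      Filter.Tendsto
        (fun ε : ℝ => ∫ t in Set.Icc a b,
          ψ t / ((t : ℂ) - (lam : ℂ) - Complex.I * (ε : ℂ)))
        (nhdsWithin 0 (Set.Ioi 0))
        (nhds (L + (Real.pi : ℂ) * Complex.I * ψ lam)) := by
  obtain ⟨hα0, hα1⟩ := hα
  obtain ⟨ha, hb⟩ := hlam
  have hlam_mem : lam ∈ Icc a b := ⟨ha.le, hb.le⟩
  -- continuity of ψ on [a,b]
  have hψc : ContinuousOn ψ (Icc a b) := by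
    intro t ht
    have hbnd : Tendsto (fun s : ℝ => M * |s - t| ^ α) (𝓝[Icc a b] t) (𝓝 0) := by
      have hc : ContinuousAt (fun s : ℝ => M * |s - t| ^ α) t := by
        have hg : ContinuousAt (fun s : ℝ => |s - t|) t :=
          ((continuous_id.sub continuous_const).abs).continuousAt
        exact (hg.rpow_const (Or.inr hα0.le)).const_mul M
      have := hc.tendsto.mono_left (nhdsWithin_le_nhds (s := Icc a b))
      simpa [Real.zero_rpow hα0.ne'] using this
    rw [ContinuousWithinAt, tendsto_iff_norm_sub_tendsto_zero]
    refine squeeze_zero' ?_ ?_ hbnd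
    · exact Eventually.of_forall fun s => norm_nonneg _
    · filter_upwards [eventually_mem_nhdsWithin] with s hs
      exact hHolder s hs t ht
  -- integrable bound
  set bound : ℝ → ℝ := fun t => M * |t - lam| ^ (α - 1) with hbound_def
  have hbound_int : IntegrableOn bound (Icc a b) := by
    have hr : (-1 : ℝ) < α - 1 := by linarith
    have hpos : ∀ c : ℝ, 0 ≤ c →
        IntervalIntegrable (fun x : ℝ => |x| ^ (α - 1)) volume 0 c := by
      intro c hc
      rw [intervalIntegrable_iff]
      have h0 : IntegrableOn (fun x : ℝ => x ^ (α - 1)) (Set.uIoc (0:ℝ) c) volume := by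
        rw [← intervalIntegrable_iff]
        exact intervalIntegral.intervalIntegrable_rpow' hr
      refine h0.congr_fun (fun x hx => ?_) measurableSet_uIoc
      rw [uIoc_of_le hc] at hx
      rw [abs_of_pos hx.1]
    have hneg : IntervalIntegrable (fun x : ℝ => |x| ^ (α - 1)) volume (a - lam) 0 := by
      rw [IntervalIntegrable.iff_comp_neg]
      simp only [abs_neg, neg_sub, neg_zero]
      exact (hpos (lam - a) (by linarith)).symm
    have h2 : IntervalIntegrable (fun x : ℝ => |x| ^ (α - 1)) volume (a - lam) (b - lam) :=
      hneg.trans (hpos (b - lam) (by linarith))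
    have h3 := (h2.comp_sub_right lam).const_mul M
    rw [intervalIntegrable_iff_integrableOn_Icc_of_le (by linarith)] at h3
    simpa using h3
  have hbound_nonneg : ∀ t, 0 ≤ bound t := fun t =>
    mul_nonneg hM (Real.rpow_nonneg (abs_nonneg _) _)
  -- key pointwise bound
  have key : ∀ t ∈ Icc a b, ∀ w : ℂ, |t - lam| ≤ ‖w‖ →
      ‖(ψ t - ψ lam) / w‖ ≤ bound t := by
    intro t ht w hw
    by_cases htl : t = lam
    · subst htl
      simp only [sub_self, zero_div, norm_zero]
      exact hbound_nonneg t
    · have hpos : 0 < |t - lam| := abs_pos.mpr (sub_ne_zero.mpr htl)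
      have hw0 : 0 < ‖w‖ := lt_of_lt_of_le hpos hw
      rw [norm_div]
      calc ‖ψ t - ψ lam‖ / ‖w‖ ≤ ‖ψ t - ψ lam‖ / |t - lam| :=
            div_le_div_of_nonneg_left (norm_nonneg _) hpos hw
        _ ≤ (M * |t - lam| ^ α) / |t - lam| :=
            (div_le_div_iff_of_pos_right hpos).mpr (hHolder t ht lam hlam_mem)
        _ = bound t := by
            show _ = M * |t - lam| ^ (α - 1)
            rw [Real.rpow_sub hpos, Real.rpow_one, mul_div_assoc]
  -- the regularized function g
  set g : ℝ → ℂ := fun t => (ψ t - ψ lam) / ((t:ℂ) - (lam:ℂ)) with hg_def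
  have hg_meas : AEStronglyMeasurable g (volume.restrict (Icc a b)) := by
    have h1 : AEStronglyMeasurable (fun t : ℝ => ψ t - ψ lam) (volume.restrict (Icc a b)) :=
      (hψc.sub continuousOn_const).aestronglyMeasurable measurableSet_Icc
    have h2 : Measurable (fun t : ℝ => ((t:ℂ) - (lam:ℂ))⁻¹) :=
      (Complex.measurable_ofReal.sub measurable_const).inv
    have h3 := h1.mul h2.aestronglyMeasurable
    rw [hg_def]
    simp only [div_eq_mul_inv]
    exact h3
  have hg_bound : ∀ t ∈ Icc a b, ‖g t‖ ≤ bound t := by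
    intro t ht
    refine key t ht _ ?_
    have : ((t:ℂ) - (lam:ℂ)) = ((t - lam : ℝ) : ℂ) := by push_cast; ring
    rw [this, Complex.norm_real, Real.norm_eq_abs]
  have hg_int : IntegrableOn g (Icc a b) := by
    refine hbound_int.mono' hg_meas ?_
    filter_upwards [ae_restrict_mem measurableSet_Icc] with t ht
    exact hg_bound t ht
  set Ig : ℂ := ∫ t in Icc a b, g t with hIg_def
  set c : ℂ := (Real.log (b - lam) : ℂ) - (Real.log (lam - a) : ℂ) with hc_def
  have hne_t : ∀ t : ℝ, t ≠ lam → ((t:ℂ) - (lam:ℂ)) ≠ 0 := by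
    intro t ht
    have : ((t:ℂ) - (lam:ℂ)) = ((t - lam : ℝ) : ℂ) := by push_cast; ring
    rw [this]
    exact_mod_cast sub_ne_zero.mpr ht
  have h_ae_ne : ∀ᵐ t ∂(volume.restrict (Icc a b)), t ≠ lam := by
    refine ae_restrict_of_ae ?_
    rw [ae_iff]
    simp only [ne_eq, not_not, setOf_eq_eq_singleton]
    exact measure_singleton lam
  refine ⟨Ig + ψ lam * c, ?_, ?_⟩
  · -- principal value part
    have hDCT : Tendsto (fun δ : ℝ => ∫ t in Icc a b,
        ((Ioo (lam - δ) (lam + δ))ᶜ).indicator g t) (𝓝[>] (0:ℝ)) (𝓝 Ig) := by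
      apply tendsto_integral_filter_of_dominated_convergence bound
      · exact Eventually.of_forall fun δ => hg_meas.indicator measurableSet_Ioo.compl
      · refine Eventually.of_forall fun δ => ?_
        filter_upwards [ae_restrict_mem measurableSet_Icc] with t ht
        exact (norm_indicator_le_norm_self g t).trans (hg_bound t ht)
      · exact hbound_int
      · filter_upwards [h_ae_ne] with t ht
        have hpos : 0 < |t - lam| := abs_pos.mpr (sub_ne_zero.mpr ht)
        refine Tendsto.congr' ?_ tendsto_const_nhds
        filter_upwards [Ioo_mem_nhdsGT hpos] with δ hδ
        have hmem : t ∈ (Ioo (lam - δ) (lam + δ))ᶜ := by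
          simp only [mem_compl_iff, mem_Ioo, not_and, not_lt]
          intro h1
          rcases lt_abs.mp hδ.2 with h | h
          · linarith
          · linarith
        exact (indicator_of_mem hmem g).symm
    have hmin : (0:ℝ) < min (lam - a) (b - lam) := lt_min (by linarith) (by linarith)
    have hmain : ∀ δ ∈ Ioo (0:ℝ) (min (lam - a) (b - lam)),
        (∫ t in Icc a b \ Ioo (lam - δ) (lam + δ), ψ t / ((t:ℂ) - (lam:ℂ)))
          = (∫ t in Icc a b, ((Ioo (lam - δ) (lam + δ))ᶜ).indicator g t) + ψ lam * c := by
      intro δ hδ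
      obtain ⟨hδ0, hδm⟩ := hδ
      have hδa : a ≤ lam - δ := by
        have := (lt_min_iff.mp hδm).1; linarith
      have hδb : lam + δ ≤ b := by
        have := (lt_min_iff.mp hδm).2; linarith
      have hS_sub : Icc a b \ Ioo (lam - δ) (lam + δ) ⊆ Icc a b := diff_subset
      have hinv_contS : ∀ s : Set ℝ, (∀ t ∈ s, t ≠ lam) →
          ContinuousOn (fun t : ℝ => ((t:ℂ) - (lam:ℂ))⁻¹) s := by
        intro s hs
        exact (Complex.continuous_ofReal.continuousOn.sub continuousOn_const).inv₀
          fun t ht => hne_t t (hs t ht)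
      have hil : IntegrableOn (fun t : ℝ => ((t:ℂ) - (lam:ℂ))⁻¹) (Icc a (lam - δ)) := by
        refine (hinv_contS _ ?_).integrableOn_compact isCompact_Icc
        intro t ht; exact ne_of_lt (by linarith [ht.2] : t < lam)
      have hir : IntegrableOn (fun t : ℝ => ((t:ℂ) - (lam:ℂ))⁻¹) (Icc (lam + δ) b) := by
        refine (hinv_contS _ ?_).integrableOn_compact isCompact_Icc
        intro t ht; exact ne_of_gt (by linarith [ht.1] : lam < t)
      have hSeq : Icc a b \ Ioo (lam - δ) (lam + δ) = Icc a (lam - δ) ∪ Icc (lam + δ) b := by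
        ext x
        simp only [mem_diff, mem_Icc, mem_union, mem_Ioo, not_and, not_lt]
        constructor
        · rintro ⟨⟨h1, h2⟩, h3⟩
          by_cases h : lam - δ < x
          · exact Or.inr ⟨h3 h, h2⟩
          · exact Or.inl ⟨h1, not_lt.mp h⟩
        · rintro (⟨h1, h2⟩ | ⟨h1, h2⟩)
          · exact ⟨⟨h1, by linarith⟩, fun h => by linarith⟩
          · exact ⟨⟨by linarith, h2⟩, fun h => by linarith⟩
      have hinv_int : IntegrableOn (fun t : ℝ => ((t:ℂ) - (lam:ℂ))⁻¹)
          (Icc a b \ Ioo (lam - δ) (lam + δ)) := by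
        rw [hSeq]; exact hil.union hir
      have hpt : ∀ t : ℝ, ψ t / ((t:ℂ) - (lam:ℂ)) = g t + ψ lam * ((t:ℂ) - (lam:ℂ))⁻¹ := by
        intro t
        rw [hg_def]
        simp only [div_eq_mul_inv]
        ring
      have hsplit : (∫ t in Icc a b \ Ioo (lam - δ) (lam + δ), ψ t / ((t:ℂ) - (lam:ℂ)))
          = (∫ t in Icc a b \ Ioo (lam - δ) (lam + δ), g t)
            + ψ lam * ∫ t in Icc a b \ Ioo (lam - δ) (lam + δ), ((t:ℂ) - (lam:ℂ))⁻¹ := by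
        simp_rw [hpt]
        rw [integral_add (hg_int.mono_set hS_sub) (hinv_int.const_mul _),
          integral_const_mul]
      have hind : (∫ t in Icc a b \ Ioo (lam - δ) (lam + δ), g t)
          = ∫ t in Icc a b, ((Ioo (lam - δ) (lam + δ))ᶜ).indicator g t := by
        rw [setIntegral_indicator measurableSet_Ioo.compl, diff_eq]
      have hleft : (∫ t in Icc a (lam - δ), ((t:ℂ) - (lam:ℂ))⁻¹)
          = Complex.log ((δ:ℝ):ℂ) - Complex.log (((lam - a : ℝ)):ℂ) := by
        rw [integral_Icc_eq_integral_Ioc, ← intervalIntegral.integral_of_le hδa]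
        have hderiv : ∀ t ∈ uIcc a (lam - δ),
            HasDerivAt (fun s : ℝ => Complex.log ((lam:ℂ) - (s:ℂ))) (((t:ℂ) - (lam:ℂ))⁻¹) t := by
          intro t htm
          rw [uIcc_of_le hδa] at htm
          have hmem : ((lam:ℂ) - (t:ℂ)) ∈ Complex.slitPlane := by
            have heq : ((lam:ℂ) - (t:ℂ)) = ((lam - t : ℝ):ℂ) := by push_cast; ring
            rw [heq]
            exact Complex.ofReal_mem_slitPlane.mpr (by linarith [htm.2])
          have hinner : HasDerivAt (fun s : ℝ => (lam:ℂ) - (s:ℂ)) (-1) t := by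
            simpa using (hasDerivAt_ofReal' t).const_sub (lam:ℂ)
          have h := hinner.clog_real hmem
          convert h using 1
          rw [div_eq_mul_inv, neg_one_mul, ← inv_neg, neg_sub]
        have hci : IntervalIntegrable (fun t : ℝ => ((t:ℂ) - (lam:ℂ))⁻¹) volume a (lam - δ) := by
          rw [intervalIntegrable_iff_integrableOn_Icc_of_le hδa]
          exact hil
        rw [intervalIntegral.integral_eq_sub_of_hasDerivAt hderiv hci]
        have e1 : ((lam:ℂ) - (((lam - δ : ℝ)):ℂ)) = ((δ:ℝ):ℂ) := by push_cast; ring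
        have e2 : ((lam:ℂ) - ((a : ℝ):ℂ)) = ((lam - a : ℝ):ℂ) := by push_cast; ring
        rw [e1, e2]
      have hright : (∫ t in Icc (lam + δ) b, ((t:ℂ) - (lam:ℂ))⁻¹)
          = Complex.log (((b - lam : ℝ)):ℂ) - Complex.log ((δ:ℝ):ℂ) := by
        have hle : lam + δ ≤ b := hδb
        rw [integral_Icc_eq_integral_Ioc, ← intervalIntegral.integral_of_le hle]
        have hderiv : ∀ t ∈ uIcc (lam + δ) b,
            HasDerivAt (fun s : ℝ => Complex.log ((s:ℂ) - (lam:ℂ))) (((t:ℂ) - (lam:ℂ))⁻¹) t := by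
          intro t htm
          rw [uIcc_of_le hle] at htm
          have hmem : ((t:ℂ) - (lam:ℂ)) ∈ Complex.slitPlane := by
            have heq : ((t:ℂ) - (lam:ℂ)) = ((t - lam : ℝ):ℂ) := by push_cast; ring
            rw [heq]
            exact Complex.ofReal_mem_slitPlane.mpr (by linarith [htm.1])
          have hinner : HasDerivAt (fun s : ℝ => (s:ℂ) - (lam:ℂ)) 1 t := by
            simpa using (hasDerivAt_ofReal' t).sub_const (lam:ℂ)
          have h := hinner.clog_real hmem
          convert h using 1
          rw [div_eq_mul_inv, one_mul]
        have hci : IntervalIntegrable (fun t : ℝ => ((t:ℂ) - (lam:ℂ))⁻¹) volume (lam + δ) b := by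
          rw [intervalIntegrable_iff_integrableOn_Icc_of_le hle]
          exact hir
        rw [intervalIntegral.integral_eq_sub_of_hasDerivAt hderiv hci]
        have e1 : (((b : ℝ)):ℂ) - ((lam:ℝ):ℂ) = ((b - lam : ℝ):ℂ) := by push_cast; ring
        have e2 : ((((lam + δ) : ℝ)):ℂ) - ((lam:ℝ):ℂ) = ((δ:ℝ):ℂ) := by push_cast; ring
        rw [e1, e2]
      have hdisj : Disjoint (Icc a (lam - δ)) (Icc (lam + δ) b) :=
        Set.disjoint_left.mpr fun x hx hx' => by
          have h1 := hx.2; have h2 := hx'.1; linarith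
      have hScomp : (∫ t in Icc a b \ Ioo (lam - δ) (lam + δ), ((t:ℂ) - (lam:ℂ))⁻¹) = c := by
        rw [hSeq, setIntegral_union hdisj measurableSet_Icc hil hir, hleft, hright, hc_def]
        rw [← Complex.ofReal_log (by linarith : (0:ℝ) ≤ b - lam),
            ← Complex.ofReal_log (by linarith : (0:ℝ) ≤ lam - a)]
        ring
      rw [hsplit, hind, hScomp]
    refine Tendsto.congr' ?_ (hDCT.add_const (ψ lam * c))
    filter_upwards [Ioo_mem_nhdsGT hmin] with δ hδ
    exact (hmain δ hδ).symm
  · -- regularized part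
    have hd_ne : ∀ ε : ℝ, ε ≠ 0 → ∀ t : ℝ,
        ((t:ℂ) - (lam:ℂ) - Complex.I * (ε:ℂ)) ≠ 0 := by
      intro ε hε t h
      have him : ((t:ℂ) - (lam:ℂ) - Complex.I * (ε:ℂ)).im = -ε := by simp
      rw [h] at him
      simp only [Complex.zero_im] at him
      exact hε (by linarith)
    have hDCT2 : Tendsto (fun ε : ℝ => ∫ t in Icc a b,
        (ψ t - ψ lam) / ((t:ℂ) - (lam:ℂ) - Complex.I * (ε:ℂ)))
        (𝓝[>] (0:ℝ)) (𝓝 Ig) := by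
      apply tendsto_integral_filter_of_dominated_convergence bound
      · filter_upwards [self_mem_nhdsWithin] with ε hε
        have hc1 : ContinuousOn (fun t : ℝ =>
            (ψ t - ψ lam) / ((t:ℂ) - (lam:ℂ) - Complex.I * (ε:ℂ))) (Icc a b) := by
          refine (hψc.sub continuousOn_const).div ?_ fun t _ => hd_ne ε (ne_of_gt hε) t
          exact ((Complex.continuous_ofReal.sub continuous_const).sub
            continuous_const).continuousOn
        exact hc1.aestronglyMeasurable measurableSet_Icc
      · filter_upwards [self_mem_nhdsWithin] with ε hε
        filter_upwards [ae_restrict_mem measurableSet_Icc] with t ht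
        refine key t ht _ ?_
        have hre : ((t:ℂ) - (lam:ℂ) - Complex.I * (ε:ℂ)).re = t - lam := by simp
        rw [← hre]
        exact Complex.abs_re_le_norm _
      · exact hbound_int
      · filter_upwards [h_ae_ne] with t ht
        have hd0 : ((t:ℂ) - (lam:ℂ)) ≠ 0 := hne_t t ht
        have hden : Tendsto (fun ε : ℝ => (t:ℂ) - (lam:ℂ) - Complex.I * (ε:ℂ))
            (𝓝[>] (0:ℝ)) (𝓝 ((t:ℂ) - (lam:ℂ))) := by
          have hcont : Continuous (fun ε : ℝ => (t:ℂ) - (lam:ℂ) - Complex.I * (ε:ℂ)) :=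
            continuous_const.sub (continuous_const.mul Complex.continuous_ofReal)
          have h0 := (hcont.tendsto 0).mono_left (nhdsWithin_le_nhds (s := Set.Ioi (0:ℝ)))
          convert h0 using 2
          push_cast; ring
        exact Tendsto.div tendsto_const_nhds hden hd0
    have hmain2 : ∀ ε : ℝ, 0 < ε →
        (∫ t in Icc a b, ψ t / ((t:ℂ) - (lam:ℂ) - Complex.I * (ε:ℂ)))
          = (∫ t in Icc a b, (ψ t - ψ lam) / ((t:ℂ) - (lam:ℂ) - Complex.I * (ε:ℂ)))
            + ψ lam * (Complex.log ((b:ℂ) - (lam:ℂ) - Complex.I * (ε:ℂ))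
              - Complex.log ((a:ℂ) - (lam:ℂ) - Complex.I * (ε:ℂ))) := by
      intro ε hε
      have hεne := ne_of_gt hε
      have hcont_d : Continuous (fun t : ℝ => (t:ℂ) - (lam:ℂ) - Complex.I * (ε:ℂ)) :=
        (Complex.continuous_ofReal.sub continuous_const).sub continuous_const
      have hF_int : IntegrableOn (fun t : ℝ =>
          (ψ t - ψ lam) / ((t:ℂ) - (lam:ℂ) - Complex.I * (ε:ℂ))) (Icc a b) :=
        ((hψc.sub continuousOn_const).div hcont_d.continuousOn
          fun t _ => hd_ne ε hεne t).integrableOn_compact isCompact_Icc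
      have hinv_int2 : IntegrableOn (fun t : ℝ =>
          ((t:ℂ) - (lam:ℂ) - Complex.I * (ε:ℂ))⁻¹) (Icc a b) :=
        (hcont_d.continuousOn.inv₀ fun t _ => hd_ne ε hεne t).integrableOn_compact isCompact_Icc
      have hlog : (∫ t in Icc a b, ((t:ℂ) - (lam:ℂ) - Complex.I * (ε:ℂ))⁻¹)
          = Complex.log ((b:ℂ) - (lam:ℂ) - Complex.I * (ε:ℂ))
            - Complex.log ((a:ℂ) - (lam:ℂ) - Complex.I * (ε:ℂ)) := by
        rw [integral_Icc_eq_integral_Ioc, ← intervalIntegral.integral_of_le hab.le]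
        have hderiv : ∀ t ∈ uIcc a b,
            HasDerivAt (fun s : ℝ => Complex.log ((s:ℂ) - (lam:ℂ) - Complex.I * (ε:ℂ)))
              (((t:ℂ) - (lam:ℂ) - Complex.I * (ε:ℂ))⁻¹) t := by
          intro t _
          have hmem : ((t:ℂ) - (lam:ℂ) - Complex.I * (ε:ℂ)) ∈ Complex.slitPlane := by
            refine Complex.mem_slitPlane_iff.mpr (Or.inr ?_)
            have him : ((t:ℂ) - (lam:ℂ) - Complex.I * (ε:ℂ)).im = -ε := by simp
            rw [him]
            simpa using hεne
          have hinner : HasDerivAt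
              (fun s : ℝ => (s:ℂ) - (lam:ℂ) - Complex.I * (ε:ℂ)) 1 t := by
            simpa using ((hasDerivAt_ofReal' t).sub_const (lam:ℂ)).sub_const
              (Complex.I * (ε:ℂ))
          have h := hinner.clog_real hmem
          convert h using 1
          rw [div_eq_mul_inv, one_mul]
        have hci : IntervalIntegrable
            (fun t : ℝ => ((t:ℂ) - (lam:ℂ) - Complex.I * (ε:ℂ))⁻¹) volume a b := by
          rw [intervalIntegrable_iff_integrableOn_Icc_of_le hab.le]; exact hinv_int2
        rw [intervalIntegral.integral_eq_sub_of_hasDerivAt hderiv hci]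
      have hpt : ∀ t : ℝ, ψ t / ((t:ℂ) - (lam:ℂ) - Complex.I * (ε:ℂ))
          = (ψ t - ψ lam) / ((t:ℂ) - (lam:ℂ) - Complex.I * (ε:ℂ))
            + ψ lam * ((t:ℂ) - (lam:ℂ) - Complex.I * (ε:ℂ))⁻¹ := by
        intro t; simp only [div_eq_mul_inv]; ring
      simp_rw [hpt]
      rw [integral_add hF_int (hinv_int2.const_mul _), integral_const_mul, hlog]
    have hlog_b : Tendsto (fun ε : ℝ => Complex.log ((b:ℂ) - (lam:ℂ) - Complex.I * (ε:ℂ)))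
        (𝓝[>] (0:ℝ)) (𝓝 ((Real.log (b - lam) : ℂ))) := by
      have hz : Tendsto (fun ε : ℝ => (b:ℂ) - (lam:ℂ) - Complex.I * (ε:ℂ)) (𝓝[>] (0:ℝ))
          (𝓝 (((b - lam : ℝ)):ℂ)) := by
        have hcont : Continuous (fun ε : ℝ => (b:ℂ) - (lam:ℂ) - Complex.I * (ε:ℂ)) :=
          continuous_const.sub (continuous_const.mul Complex.continuous_ofReal)
        have h0 := (hcont.tendsto 0).mono_left (nhdsWithin_le_nhds (s := Set.Ioi (0:ℝ)))
        convert h0 using 2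
        push_cast; ring
      have hmem : (((b - lam : ℝ)):ℂ) ∈ Complex.slitPlane :=
        Complex.ofReal_mem_slitPlane.mpr (by linarith)
      have h := hz.clog hmem
      rw [← Complex.ofReal_log (by linarith : (0:ℝ) ≤ b - lam)] at h
      exact h
    have hlog_a : Tendsto (fun ε : ℝ => Complex.log ((a:ℂ) - (lam:ℂ) - Complex.I * (ε:ℂ)))
        (𝓝[>] (0:ℝ)) (𝓝 ((Real.log (lam - a) : ℂ) - Real.pi * Complex.I)) := by
      have hbase := Complex.tendsto_log_nhdsWithin_im_neg_of_re_neg_of_im_zero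
        (z := (((a - lam : ℝ)):ℂ)) (by simpa using (by linarith : a - lam < 0)) (by simp)
      have hz : Tendsto (fun ε : ℝ => (a:ℂ) - (lam:ℂ) - Complex.I * (ε:ℂ)) (𝓝[>] (0:ℝ))
          (𝓝[{z : ℂ | z.im < 0}] (((a - lam : ℝ)):ℂ)) := by
        rw [tendsto_nhdsWithin_iff]
        constructor
        · have hcont : Continuous (fun ε : ℝ => (a:ℂ) - (lam:ℂ) - Complex.I * (ε:ℂ)) :=
            continuous_const.sub (continuous_const.mul Complex.continuous_ofReal)
          have h0 := (hcont.tendsto 0).mono_left (nhdsWithin_le_nhds (s := Set.Ioi (0:ℝ)))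
          convert h0 using 2
          push_cast; ring
        · filter_upwards [self_mem_nhdsWithin] with ε hε
          have him : ((a:ℂ) - (lam:ℂ) - Complex.I * (ε:ℂ)).im = -ε := by simp
          simp only [mem_setOf_eq, him]
          simpa using hε
      have h := hbase.comp hz
      have habs : ‖(((a - lam : ℝ)):ℂ)‖ = lam - a := by
        rw [Complex.norm_real, Real.norm_eq_abs, abs_of_neg (by linarith : a - lam < 0)]
        ring
      rw [habs] at h
      exact h
    have hfull := hDCT2.add (Tendsto.mul (tendsto_const_nhds (x := ψ lam))
      (hlog_b.sub hlog_a))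
    have hvaleq : Ig + ψ lam * ((Real.log (b - lam) : ℂ)
        - ((Real.log (lam - a) : ℂ) - Real.pi * Complex.I))
        = (Ig + ψ lam * c) + (Real.pi : ℂ) * Complex.I * ψ lam := by
      rw [hc_def]; ring
    rw [← hvaleq]
    refine Tendsto.congr' ?_ hfull
    filter_upwards [self_mem_nhdsWithin] with ε hε
    exact (hmain2 ε hε).symm
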